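/- Let α be irrational and let (n_i) be the increasing sequence of all integers n such that (n+1)α ∈ [−a_n, b_n] (mod 1). Then there is a subsequence (n_{i_j}) of (n_i) such that a_{n_{i_j}} / b_{n_{i_j}} ∈ [1/2, 2] for every j. -/

import Mathlib

open Set Filter

/-- `inArc a w b` : the point `w` (mod 1) lies strictly inside the positively oriented
open arc of the circle `ℝ/ℤ` from `a` (mod 1) to `b` (mod 1). -/
def inArc (a w b : ℝ) : Prop :=
  0 < Int.fract (w - a) ∧ Int.fract (w - a) < Int.fract (b - a)

/-- `bseq α n = b_n` : the distance from `0` to the nearest point of the orbit segment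
`{α, 2α, …, nα}` on its right, i.e. the least fractional part `{kα}`, `1 ≤ k ≤ n`. -/
noncomputable def bseq (α : ℝ) (n : ℕ) : ℝ :=
  sInf {t : ℝ | ∃ k : ℕ, 1 ≤ k ∧ k ≤ n ∧ t = Int.fract ((k : ℝ) * α)}

/-- `aseq α n = a_n` : the distance from `0` to the nearest point of the orbit segment
`{α, 2α, …, nα}` on its left, i.e. `1` minus the largest fractional part `{kα}`, `1 ≤ k ≤ n`. -/
noncomputable def aseq (α : ℝ) (n : ℕ) : ℝ :=
  1 - sSup {t : ℝ | ∃ k : ℕ, 1 ≤ k ∧ k ≤ n ∧ t = Int.fract ((k : ℝ) * α)}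

/-- `r` is the index `r_n ∈ {1,…,n}` with `r_n α = -a_n` (mod 1). -/
def IsRIndex (α : ℝ) (n r : ℕ) : Prop :=
  1 ≤ r ∧ r ≤ n ∧ Int.fract ((r : ℝ) * α) = 1 - aseq α n

/-- `s` is the index `s_n ∈ {1,…,n}` with `s_n α = b_n` (mod 1). -/
def IsSIndex (α : ℝ) (n s : ℕ) : Prop :=
  1 ≤ s ∧ s ≤ n ∧ Int.fract ((s : ℝ) * α) = bseq α n

/-- `n + 1` is a closest return time: `(n+1)α ∈ [-a_n, b_n]` (mod 1). -/
def IsClosestReturn (α : ℝ) (n : ℕ) : Prop :=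
  Int.fract (((n : ℝ) + 1) * α) ≤ bseq α n ∨ 1 - aseq α n ≤ Int.fract (((n : ℝ) + 1) * α)

/-- The set of reals lying (mod 1) in the positively oriented open arc from `u` to `v`. -/
def arcSet (u v : ℝ) : Set ℝ := {z : ℝ | inArc u z v}

/-- The intervals `I_n, R_α(I_n), …, R_α^w(I_n), R_α^{-w}(J_n), …, J_n` are pairwise
disjoint, where `I_n = (r α, s α)` and `J_n = ((n-s)α, (n-r)α)` (mod 1). -/
def WanderDisjoint (α : ℝ) (n r s : ℕ) (w : ℤ) : Prop :=
  ∀ k l : ℤ, 0 ≤ k → k ≤ w → 0 ≤ l → l ≤ w →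
    (k ≠ l → Disjoint (arcSet (((r : ℝ) + k) * α) (((s : ℝ) + k) * α))
      (arcSet (((r : ℝ) + l) * α) (((s : ℝ) + l) * α))) ∧
    (k ≠ l → Disjoint (arcSet (((n : ℝ) - s - k) * α) (((n : ℝ) - r - k) * α))
      (arcSet (((n : ℝ) - s - l) * α) (((n : ℝ) - r - l) * α))) ∧
    Disjoint (arcSet (((r : ℝ) + k) * α) (((s : ℝ) + k) * α))
      (arcSet (((n : ℝ) - s - l) * α) (((n : ℝ) - r - l) * α))

/-- `w` is the *wandering time* `w(n)` : the largest integer `w` such that the intervals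
`I_n, R_α(I_n), …, R_α^w(I_n), R_α^{-w}(J_n), …, J_n` are pairwise disjoint. -/
def IsWanderingTime (α : ℝ) (n r s : ℕ) (w : ℤ) : Prop :=
  WanderDisjoint α n r s w ∧ ∀ w' : ℤ, WanderDisjoint α n r s w' → w' ≤ w

noncomputable def fr (α : ℝ) (k : ℕ) : ℝ := Int.fract ((k : ℝ) * α)

lemma fr_nonneg (α : ℝ) (k : ℕ) : 0 ≤ fr α k := Int.fract_nonneg _
lemma fr_lt_one (α : ℝ) (k : ℕ) : fr α k < 1 := Int.fract_lt_one _

lemma fr_pos {α : ℝ} (hα : Irrational α) {k : ℕ} (hk : 1 ≤ k) : 0 < fr α k := by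
  rcases (fr_nonneg α k).lt_or_eq with h | h
  · exact h
  · exfalso
    have hirr : Irrational ((k : ℝ) * α) := by
      have := hα.intCast_mul (m := (k : ℤ)) (by exact_mod_cast Nat.one_le_iff_ne_zero.mp hk)
      simpa using this
    have hfl := Int.floor_add_fract ((k : ℝ) * α)
    have hke : (k : ℝ) * α = ((⌊(k : ℝ) * α⌋ : ℤ) : ℝ) := by
      unfold fr at h; linarith
    rw [hke] at hirr
    exact Int.not_irrational _ hirr

lemma fr_inj {α : ℝ} (hα : Irrational α) {k l : ℕ} (h : k ≠ l) : fr α k ≠ fr α l := by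
  intro he
  have hk := Int.floor_add_fract ((k : ℝ) * α)
  have hl := Int.floor_add_fract ((l : ℝ) * α)
  unfold fr at he
  have h1 : (((k : ℤ) - l : ℤ) : ℝ) * α = ((⌊(k:ℝ)*α⌋ - ⌊(l:ℝ)*α⌋ : ℤ) : ℝ) := by
    push_cast
    linear_combination he - hk + hl
  have h2 : Irrational ((((k : ℤ) - l : ℤ) : ℝ) * α) :=
    hα.intCast_mul (by simpa using sub_ne_zero.mpr (show (k:ℤ) ≠ l by exact_mod_cast h))
  rw [h1] at h2
  exact Int.not_irrational _ h2

lemma fr_add (α : ℝ) (k l : ℕ) : fr α (k + l) = Int.fract (fr α k + fr α l) := by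
  have h1 : ((k + l : ℕ) : ℝ) * α = (fr α k + fr α l) + ((⌊(k:ℝ)*α⌋ + ⌊(l:ℝ)*α⌋ : ℤ) : ℝ) := by
    unfold fr
    push_cast
    linear_combination (-Int.floor_add_fract ((k:ℝ)*α)) - (Int.floor_add_fract ((l:ℝ)*α))
  show Int.fract _ = _
  rw [h1, Int.fract_add_intCast]

lemma fr_sub (α : ℝ) {k l : ℕ} (hlk : l ≤ k) :
    fr α (k - l) = Int.fract (fr α k - fr α l) := by
  have h1 : ((k - l : ℕ) : ℝ) * α = (fr α k - fr α l) + ((⌊(k:ℝ)*α⌋ - ⌊(l:ℝ)*α⌋ : ℤ) : ℝ) := by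
    unfold fr
    push_cast [hlk]
    linear_combination (-Int.floor_add_fract ((k:ℝ)*α)) + (Int.floor_add_fract ((l:ℝ)*α))
  show Int.fract _ = _
  rw [h1, Int.fract_add_intCast]

lemma fr_sub_lt (α : ℝ) {k l : ℕ} (hlk : l ≤ k) (h : fr α l < fr α k) :
    fr α (k - l) = fr α k - fr α l := by
  rw [fr_sub α hlk, Int.fract_eq_self.mpr ⟨by linarith, by linarith [fr_lt_one α k, fr_nonneg α l]⟩]

lemma fr_sub_gt (α : ℝ) {k l : ℕ} (hlk : l ≤ k) (h : fr α k < fr α l) :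
    fr α (k - l) = fr α k - fr α l + 1 := by
  have h1 : Int.fract (fr α k - fr α l) = Int.fract (fr α k - fr α l + 1) := by
    rw [show (1:ℝ) = ((1:ℤ):ℝ) by norm_num, Int.fract_add_intCast]
  rw [fr_sub α hlk, h1,
    Int.fract_eq_self.mpr ⟨by linarith [fr_nonneg α k, fr_lt_one α l], by linarith [fr_nonneg α l]⟩]


def orbSet (α : ℝ) (n : ℕ) : Set ℝ := {t : ℝ | ∃ k : ℕ, 1 ≤ k ∧ k ≤ n ∧ t = Int.fract ((k : ℝ) * α)}

lemma bseq_def (α : ℝ) (n : ℕ) : bseq α n = sInf (orbSet α n) := rfl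
lemma aseq_def (α : ℝ) (n : ℕ) : aseq α n = 1 - sSup (orbSet α n) := rfl

lemma orbSet_finite (α : ℝ) (n : ℕ) : (orbSet α n).Finite := by
  have hsub : orbSet α n ⊆ (fun k : ℕ => Int.fract ((k:ℝ)*α)) '' (Set.Icc 1 n) := by
    rintro t ⟨k, h1, h2, rfl⟩; exact ⟨k, ⟨h1, h2⟩, rfl⟩
  exact ((Set.finite_Icc 1 n).image _).subset hsub

lemma bseq_le (α : ℝ) {n k : ℕ} (h1 : 1 ≤ k) (h2 : k ≤ n) : bseq α n ≤ fr α k :=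
  csInf_le (orbSet_finite α n).bddBelow ⟨k, h1, h2, rfl⟩

lemma le_aseq (α : ℝ) {n k : ℕ} (h1 : 1 ≤ k) (h2 : k ≤ n) : fr α k ≤ 1 - aseq α n := by
  have h := le_csSup (orbSet_finite α n).bddAbove (show fr α k ∈ orbSet α n from ⟨k, h1, h2, rfl⟩)
  rw [aseq_def]; linarith

lemma bseq_eq_of (α : ℝ) {n σ : ℕ} {B : ℝ} (h1 : 1 ≤ σ) (h2 : σ ≤ n) (hB : fr α σ = B)
    (hlb : ∀ k, 1 ≤ k → k ≤ n → B ≤ fr α k) : bseq α n = B := by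
  apply le_antisymm
  · rw [← hB]; exact bseq_le α h1 h2
  · exact le_csInf ⟨fr α σ, σ, h1, h2, rfl⟩ (by rintro t ⟨k, hk1, hk2, rfl⟩; exact hlb k hk1 hk2)

lemma aseq_eq_of (α : ℝ) {n ρ : ℕ} {A : ℝ} (h1 : 1 ≤ ρ) (h2 : ρ ≤ n) (hA : fr α ρ = 1 - A)
    (hub : ∀ k, 1 ≤ k → k ≤ n → fr α k ≤ 1 - A) : aseq α n = A := by
  have hs : sSup (orbSet α n) = 1 - A := by
    apply le_antisymm
    · exact csSup_le ⟨fr α ρ, ρ, h1, h2, rfl⟩ (by rintro t ⟨k, hk1, hk2, rfl⟩; exact hub k hk1 hk2)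
    · rw [← hA]; exact le_csSup (orbSet_finite α n).bddAbove ⟨ρ, h1, h2, rfl⟩
  rw [aseq_def, hs]; ring


def Good (α : ℝ) (n r s : ℕ) : Prop := IsRIndex α n r ∧ IsSIndex α n s ∧ r + s = n + 1

lemma good_facts {α : ℝ} (hα : Irrational α) {n r s : ℕ} (h : Good α n r s) :
    0 < aseq α n ∧ 0 < bseq α n ∧ bseq α n ≤ 1 - aseq α n ∧ aseq α n ≠ bseq α n ∧
      aseq α n < 1 ∧ bseq α n < 1 := by
  obtain ⟨⟨hr1, hr2, hr3⟩, ⟨hs1, hs2, hs3⟩, hrs⟩ := h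
  have hr3' : fr α r = 1 - aseq α n := hr3
  have hs3' : fr α s = bseq α n := hs3
  have hbpos : 0 < bseq α n := by rw [← hs3']; exact fr_pos hα hs1
  have hapos : 0 < aseq α n := by have := fr_lt_one α r; rw [hr3'] at this; linarith
  have hble : bseq α n ≤ 1 - aseq α n := by rw [← hr3']; exact bseq_le α hr1 hr2
  have ha1 : aseq α n < 1 := by have := fr_pos hα hr1; rw [hr3'] at this; linarith
  have hb1 : bseq α n < 1 := by rw [← hs3']; exact fr_lt_one α s
  refine ⟨hapos, hbpos, hble, ?_, ha1, hb1⟩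
  intro he
  have h1 : fr α (r + s) = Int.fract (fr α r + fr α s) := fr_add α r s
  rw [hr3', hs3', ← he] at h1
  have h2 : (1 : ℝ) - aseq α n + aseq α n = 1 := by ring
  rw [h2, Int.fract_one] at h1
  exact absurd h1 (ne_of_gt (fr_pos hα (by omega)))

lemma good_frn1 {α : ℝ} {n r s : ℕ} (h : Good α n r s) :
    fr α (n + 1) = Int.fract (bseq α n - aseq α n + 1) := by
  obtain ⟨⟨hr1, hr2, hr3⟩, ⟨hs1, hs2, hs3⟩, hrs⟩ := h
  have hr3' : fr α r = 1 - aseq α n := hr3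
  have hs3' : fr α s = bseq α n := hs3
  rw [← hrs, fr_add, hr3', hs3']
  congr 1; ring

lemma good_closest {α : ℝ} (hα : Irrational α) {n r s : ℕ} (h : Good α n r s) :
    IsClosestReturn α n := by
  obtain ⟨hapos, hbpos, hble, hanb, ha1, hb1⟩ := good_facts hα h
  have h1 := good_frn1 h
  have hcast : Int.fract (((n : ℝ) + 1) * α) = fr α (n + 1) := by
    unfold fr; push_cast; ring_nf
  rcases lt_or_gt_of_ne hanb with hab | hab
  · left
    have h2 : Int.fract (bseq α n - aseq α n + 1) = bseq α n - aseq α n := by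
      rw [show bseq α n - aseq α n + 1 = bseq α n - aseq α n + ((1:ℤ):ℝ) by norm_num,
        Int.fract_add_intCast, Int.fract_eq_self.mpr ⟨by linarith, by linarith⟩]
    rw [hcast, h1, h2]; linarith
  · right
    have h2 : Int.fract (bseq α n - aseq α n + 1) = bseq α n - aseq α n + 1 := by
      rw [Int.fract_eq_self.mpr ⟨by linarith, by linarith⟩]
    rw [hcast, h1, h2]; linarith

lemma noentry {α : ℝ} (hα : Irrational α) {m ρ σ : ℕ}
    (hρ : IsRIndex α m ρ) (hσ : IsSIndex α m σ) :
    ∀ k, m < k → k < ρ + σ → bseq α m ≤ fr α k ∧ fr α k ≤ 1 - aseq α m := by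
  obtain ⟨hρ1, hρ2, hρ3⟩ := hρ
  obtain ⟨hσ1, hσ2, hσ3⟩ := hσ
  have hρ3' : fr α ρ = 1 - aseq α m := hρ3
  have hσ3' : fr α σ = bseq α m := hσ3
  set A := aseq α m with hA
  set B := bseq α m with hB
  have hm1 : 1 ≤ m := le_trans hρ1 hρ2
  have hBpos : 0 < B := by rw [← hσ3']; exact fr_pos hα hσ1
  have hApos : 0 < A := by have := fr_lt_one α ρ; rw [hρ3'] at this; linarith
  have hA1 : A < 1 := by have := fr_pos hα hρ1; rw [hρ3'] at this; linarith
  have hBle : B ≤ 1 - A := by rw [← hρ3']; exact bseq_le α hρ1 hρ2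
  have hfrρσ : fr α (ρ + σ) = Int.fract (B - A + 1) := by
    rw [fr_add, hρ3', hσ3']; congr 1; ring
  intro k
  induction k using Nat.strong_induction_on with
  | _ k IH =>
    intro hk1 hk2
    by_contra hcon
    push_neg at hcon
    have hkρσ : k ≠ ρ + σ := Nat.ne_of_lt hk2
    have hne : fr α k ≠ fr α (ρ + σ) := fr_inj hα hkρσ
    have hkpos : 0 < fr α k := fr_pos hα (by omega)
    have hklt1 : fr α k < 1 := fr_lt_one α k
    have hgap : ∀ j : ℕ, 1 ≤ j → j < k → (fr α j < B ∨ 1 - A < fr α j) → False := by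
      intro j hj1 hj2 hj3
      rcases le_or_gt j m with hjm | hjm
      · have h4 := bseq_le α hj1 hjm
        have h5 := le_aseq α hj1 hjm
        rcases hj3 with h | h
        · rw [← hB] at h4; linarith
        · rw [← hA] at h5; linarith
      · have h6 := IH j hj2 hjm (by omega)
        rcases hj3 with h | h
        · linarith [h6.1]
        · linarith [h6.2]
    rcases lt_or_ge (fr α k) B with hfk | hfk
    · -- fr k < B
      rcases lt_trichotomy (fr α k) (B - A) with h1 | h1 | h1
      · -- j = k - ρ : fr j = fr k + A ∈ (0, B)
        have hρk : ρ ≤ k := le_trans hρ2 (le_of_lt hk1)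
        have hlt : fr α k < fr α ρ := by rw [hρ3']; linarith
        have hj := fr_sub_gt α hρk hlt
        rw [hρ3'] at hj
        exact hgap (k - ρ) (by omega) (by omega) (Or.inl (by rw [hj]; linarith))
      · exact hne (by
          rw [hfrρσ, show B - A + 1 = B - A + ((1:ℤ):ℝ) by norm_num, Int.fract_add_intCast,
            Int.fract_eq_self.mpr ⟨by linarith, by linarith⟩]
          exact h1)
      · -- j = k - σ : fr j = fr k - B + 1 ∈ (1 - A, 1)
        have hσk : σ ≤ k := le_trans hσ2 (le_of_lt hk1)
        have hlt : fr α k < fr α σ := by rw [hσ3']; linarith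
        have hj := fr_sub_gt α hσk hlt
        rw [hσ3'] at hj
        exact hgap (k - σ) (by omega) (by omega) (Or.inr (by rw [hj]; linarith))
    · have hfk2 : 1 - A < fr α k := hcon hfk
      rcases lt_trichotomy (fr α k) (1 - A + B) with h1 | h1 | h1
      · -- j = k - ρ : fr j = fr k - (1 - A) ∈ (0, B)
        have hρk : ρ ≤ k := le_trans hρ2 (le_of_lt hk1)
        have hlt : fr α ρ < fr α k := by rw [hρ3']; linarith
        have hj := fr_sub_lt α hρk hlt
        rw [hρ3'] at hj
        exact hgap (k - ρ) (by omega) (by omega) (Or.inl (by rw [hj]; linarith))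
      · exact hne (by
          rw [hfrρσ, Int.fract_eq_self.mpr ⟨by linarith, by linarith⟩, h1]
          ring)
      · -- j = k - σ : fr j = fr k - B ∈ (1 - A, 1)
        have hσk : σ ≤ k := le_trans hσ2 (le_of_lt hk1)
        have hlt : fr α σ < fr α k := by rw [hσ3']; linarith
        have hj := fr_sub_lt α hσk hlt
        rw [hσ3'] at hj
        exact hgap (k - σ) (by omega) (by omega) (Or.inr (by rw [hj]; linarith))

lemma extend {α : ℝ} (hα : Irrational α) {m ρ σ : ℕ}
    (hρ : IsRIndex α m ρ) (hσ : IsSIndex α m σ) (hm : m < ρ + σ) :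
    Good α (ρ + σ - 1) ρ σ ∧ aseq α (ρ + σ - 1) = aseq α m ∧ bseq α (ρ + σ - 1) = bseq α m := by
  have hne := noentry hα hρ hσ
  obtain ⟨hρ1, hρ2, hρ3⟩ := hρ
  obtain ⟨hσ1, hσ2, hσ3⟩ := hσ
  have hρ3' : fr α ρ = 1 - aseq α m := hρ3
  have hσ3' : fr α σ = bseq α m := hσ3
  have haseq : aseq α (ρ + σ - 1) = aseq α m := by
    apply aseq_eq_of α hρ1 (by omega) hρ3'
    intro k hk1 hk2
    rcases le_or_gt k m with hkm | hkm
    · exact le_aseq α hk1 hkm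
    · exact (hne k hkm (by omega)).2
  have hbseq : bseq α (ρ + σ - 1) = bseq α m := by
    apply bseq_eq_of α hσ1 (by omega) hσ3'
    intro k hk1 hk2
    rcases le_or_gt k m with hkm | hkm
    · exact bseq_le α hk1 hkm
    · exact (hne k hkm (by omega)).1
  refine ⟨⟨⟨hρ1, by omega, ?_⟩, ⟨hσ1, by omega, ?_⟩, by omega⟩, haseq, hbseq⟩
  · rw [haseq]; exact hρ3
  · rw [hbseq]; exact hσ3

lemma step {α : ℝ} (hα : Irrational α) {n r s : ℕ} (h : Good α n r s) :
    ∃ n' r' s', n < n' ∧ Good α n' r' s' ∧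
      ((aseq α n < bseq α n ∧ aseq α n' = aseq α n ∧ bseq α n' = bseq α n - aseq α n) ∨
       (bseq α n < aseq α n ∧ aseq α n' = aseq α n - bseq α n ∧ bseq α n' = bseq α n)) := by
  obtain ⟨hapos, hbpos, hble, hanb, ha1, hb1⟩ := good_facts hα h
  have hfr1 := good_frn1 h
  obtain ⟨⟨hr1, hr2, hr3⟩, ⟨hs1, hs2, hs3⟩, hrs⟩ := h
  have hr3' : fr α r = 1 - aseq α n := hr3
  have hs3' : fr α s = bseq α n := hs3
  rcases lt_or_gt_of_ne hanb with hab | hab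
  · -- a < b : new right neighbour at n+1
    have hfrn1 : fr α (n + 1) = bseq α n - aseq α n := by
      rw [hfr1, show bseq α n - aseq α n + 1 = bseq α n - aseq α n + ((1:ℤ):ℝ) by norm_num,
        Int.fract_add_intCast, Int.fract_eq_self.mpr ⟨by linarith, by linarith⟩]
    have hA1 : aseq α (n + 1) = aseq α n := by
      apply aseq_eq_of α hr1 (by omega) hr3'
      intro k hk1 hk2
      rcases le_or_gt k n with hkn | hkn
      · exact le_aseq α hk1 hkn
      · have hk : k = n + 1 := by omega
        rw [hk, hfrn1]; linarith
    have hB1 : bseq α (n + 1) = bseq α n - aseq α n := by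
      apply bseq_eq_of α (show 1 ≤ n + 1 by omega) le_rfl hfrn1
      intro k hk1 hk2
      rcases le_or_gt k n with hkn | hkn
      · have := bseq_le α hk1 hkn; linarith
      · have hk : k = n + 1 := by omega
        rw [hk, hfrn1]
    have hRI : IsRIndex α (n + 1) r := ⟨hr1, by omega, by rw [hA1]; exact hr3⟩
    have hSI : IsSIndex α (n + 1) (n + 1) := ⟨by omega, le_rfl, by rw [hB1]; exact hfrn1⟩
    obtain ⟨hg, hA2, hB2⟩ := extend hα hRI hSI (by omega)
    exact ⟨r + (n + 1) - 1, r, n + 1, by omega, hg,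
      Or.inl ⟨hab, by rw [hA2, hA1], by rw [hB2, hB1]⟩⟩
  · -- b < a : new left neighbour at n+1
    have hfrn1 : fr α (n + 1) = bseq α n - aseq α n + 1 := by
      rw [hfr1, Int.fract_eq_self.mpr ⟨by linarith, by linarith⟩]
    have hA1 : aseq α (n + 1) = aseq α n - bseq α n := by
      apply aseq_eq_of α (show 1 ≤ n + 1 by omega) le_rfl (by rw [hfrn1]; ring)
      intro k hk1 hk2
      rcases le_or_gt k n with hkn | hkn
      · have := le_aseq α hk1 hkn; linarith
      · have hk : k = n + 1 := by omega
        rw [hk, hfrn1]; linarith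
    have hB1 : bseq α (n + 1) = bseq α n := by
      apply bseq_eq_of α hs1 (by omega) hs3'
      intro k hk1 hk2
      rcases le_or_gt k n with hkn | hkn
      · exact bseq_le α hk1 hkn
      · have hk : k = n + 1 := by omega
        rw [hk, hfrn1]; linarith
    have hRI : IsRIndex α (n + 1) (n + 1) := ⟨by omega, le_rfl, by rw [hA1]; show fr α (n + 1) = _; rw [hfrn1]; ring⟩
    have hSI : IsSIndex α (n + 1) s := ⟨hs1, by omega, by rw [hB1]; exact hs3⟩
    obtain ⟨hg, hA2, hB2⟩ := extend hα hRI hSI (by omega)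
    exact ⟨(n + 1) + s - 1, n + 1, s, by omega, hg,
      Or.inr ⟨hab, by rw [hA2, hA1], by rw [hB2, hB1]⟩⟩

lemma good_one {α : ℝ} (hα : Irrational α) : Good α 1 1 1 := by
  have hb : bseq α 1 = fr α 1 := by
    apply bseq_eq_of α le_rfl le_rfl rfl
    intro k hk1 hk2
    have hk : k = 1 := by omega
    rw [hk]
  have ha : aseq α 1 = 1 - fr α 1 := by
    apply aseq_eq_of α le_rfl le_rfl (by ring)
    intro k hk1 hk2
    have hk : k = 1 := by omega
    rw [hk]; linarith
  exact ⟨⟨le_rfl, le_rfl, by rw [ha]; show fr α 1 = _; ring⟩,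
    ⟨le_rfl, le_rfl, hb.symm⟩, rfl⟩

lemma ceil_eq_one' {x : ℝ} (h0 : 0 < x) (h1 : x ≤ 1) : ⌈x⌉ = 1 := by
  have ha : ⌈x⌉ ≤ 1 := Int.ceil_le.mpr (by exact_mod_cast h1)
  have hb : 0 < ⌈x⌉ := Int.ceil_pos.mpr h0
  omega

lemma reach {α : ℝ} (hα : Irrational α) :
    ∀ μ : ℕ, ∀ n r s : ℕ, Good α n r s →
      (⌈aseq α n / bseq α n⌉ + ⌈bseq α n / aseq α n⌉).toNat ≤ μ →
      ∃ n', n ≤ n' ∧ 1 ≤ n' ∧ IsClosestReturn α n' ∧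
        aseq α n' / bseq α n' ∈ Set.Icc (1/2 : ℝ) 2 := by
  intro μ
  induction μ with
  | zero =>
    intro n r s hg hμ
    exfalso
    obtain ⟨hapos, hbpos, _, _, _, _⟩ := good_facts hα hg
    have h1 : (1:ℤ) ≤ ⌈aseq α n / bseq α n⌉ := Int.ceil_pos.mpr (div_pos hapos hbpos)
    have h2 : (1:ℤ) ≤ ⌈bseq α n / aseq α n⌉ := Int.ceil_pos.mpr (div_pos hbpos hapos)
    omega
  | succ μ IH =>
    intro n r s hg hμ
    obtain ⟨hapos, hbpos, hble, hanb, ha1, hb1⟩ := good_facts hα hg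
    have hn1 : 1 ≤ n := le_trans hg.1.1 hg.1.2.1
    by_cases hbal : 1/2 ≤ aseq α n / bseq α n ∧ aseq α n / bseq α n ≤ 2
    · exact ⟨n, le_rfl, hn1, good_closest hα hg, hbal.1, hbal.2⟩
    · obtain ⟨n', r', s', hlt, hg', hcase⟩ := step hα hg
      have hkey : (⌈aseq α n' / bseq α n'⌉ + ⌈bseq α n' / aseq α n'⌉).toNat ≤ μ := by
        rcases (not_and_or.mp hbal) with ht | ht
        · -- a/b < 1/2, so a < b
          push_neg at ht
          have hab : 2 * aseq α n < bseq α n := by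
            rw [div_lt_div_iff₀ hbpos (by norm_num)] at ht; linarith
          have hab' : aseq α n < bseq α n := by linarith
          rcases hcase with ⟨_, hA, hB⟩ | ⟨hba, _, _⟩
          · rw [hA, hB]
            have hc1 : ⌈aseq α n / (bseq α n - aseq α n)⌉ = 1 :=
              ceil_eq_one' (div_pos hapos (by linarith))
                ((div_le_one (by linarith)).mpr (by linarith))
            have hc2 : (bseq α n - aseq α n) / aseq α n = bseq α n / aseq α n - 1 := by
              field_simp
            have hc3 : ⌈(bseq α n - aseq α n) / aseq α n⌉ = ⌈bseq α n / aseq α n⌉ - 1 := by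
              rw [hc2, Int.ceil_sub_one]
            have hc4 : ⌈aseq α n / bseq α n⌉ = 1 :=
              ceil_eq_one' (div_pos hapos hbpos) ((div_le_one hbpos).mpr (by linarith))
            have hc5 : (1:ℤ) ≤ ⌈bseq α n / aseq α n⌉ := Int.ceil_pos.mpr (div_pos hbpos hapos)
            rw [hc1, hc3]
            rw [hc4] at hμ
            omega
          · exact absurd hba (by linarith)
        · -- 2 < a/b, so b < a
          push_neg at ht
          have hab : 2 * bseq α n < aseq α n := by
            rw [lt_div_iff₀ hbpos] at ht; linarith
          have hab' : bseq α n < aseq α n := by linarith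
          rcases hcase with ⟨hba, _, _⟩ | ⟨_, hA, hB⟩
          · exact absurd hba (by linarith)
          · rw [hA, hB]
            have hc1 : ⌈bseq α n / (aseq α n - bseq α n)⌉ = 1 :=
              ceil_eq_one' (div_pos hbpos (by linarith))
                ((div_le_one (by linarith)).mpr (by linarith))
            have hc2 : (aseq α n - bseq α n) / bseq α n = aseq α n / bseq α n - 1 := by
              field_simp
            have hc3 : ⌈(aseq α n - bseq α n) / bseq α n⌉ = ⌈aseq α n / bseq α n⌉ - 1 := by
              rw [hc2, Int.ceil_sub_one]
            have hc4 : ⌈bseq α n / aseq α n⌉ = 1 :=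
              ceil_eq_one' (div_pos hbpos hapos) ((div_le_one hapos).mpr (by linarith))
            have hc5 : (1:ℤ) ≤ ⌈aseq α n / bseq α n⌉ := Int.ceil_pos.mpr (div_pos hapos hbpos)
            rw [hc1, hc3]
            rw [hc4] at hμ
            omega
      obtain ⟨n'', h1, h2, h3, h4⟩ := IH n' r' s' hg' hkey
      exact ⟨n'', by omega, h2, h3, h4⟩

theorem balanced_closest_returns (α : ℝ) (hα : Irrational α) :
    ∀ N : ℕ, ∃ n : ℕ, N ≤ n ∧ 1 ≤ n ∧ IsClosestReturn α n ∧
      aseq α n / bseq α n ∈ Icc (1 / 2 : ℝ) 2 := by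
  have hgood : ∀ N : ℕ, ∃ n r s : ℕ, N ≤ n ∧ Good α n r s := by
    intro N
    induction N with
    | zero => exact ⟨1, 1, 1, by omega, good_one hα⟩
    | succ N IH =>
      obtain ⟨n, r, s, hn, hg⟩ := IH
      obtain ⟨n', r', s', hlt, hg', _⟩ := step hα hg
      exact ⟨n', r', s', by omega, hg'⟩
  intro N
  obtain ⟨n, r, s, hNn, hg⟩ := hgood N
  obtain ⟨n', h1, h2, h3, h4⟩ :=
    reach hα (⌈aseq α n / bseq α n⌉ + ⌈bseq α n / aseq α n⌉).toNat n r s hg le_rfl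
  exact ⟨n', le_trans hNn h1, h2, h3, h4⟩
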